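/- For all integers t ≥ 2 and n ≥ t-1, the maximum number of (t-1)-cliques in an n-vertex graph with no K_t-minor equals n - t + 2. -/

import Mathlib

/-- `G` has a complete graph `K_t` as a minor: there are `t` pairwise-disjoint nonempty
branch sets, each inducing a connected subgraph, with an edge of `G` between any two. -/
def SimpleGraph.HasCompleteMinor {V : Type*} (G : SimpleGraph V) (t : ℕ) : Prop :=
  ∃ B : Fin t → Set V,
    (∀ i, (B i).Nonempty) ∧
    (∀ i, (G.induce (B i)).Connected) ∧
    (Pairwise fun i j => Disjoint (B i) (B j)) ∧
    (Pairwise fun i j => ∃ u ∈ B i, ∃ v ∈ B j, G.Adj u v)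

/-- The number of `k`-cliques of `G`. -/
noncomputable def SimpleGraph.cliqueCount {V : Type*} (G : SimpleGraph V) (k : ℕ) : ℕ :=
  {s : Finset V | G.IsNClique k s}.ncard

open SimpleGraph

set_option linter.unusedSectionVars false
set_option maxHeartbeats 1000000


lemma connected_induce_singleton {V : Type} (G : SimpleGraph V) (x : V) :
    (G.induce ({x} : Set V)).Connected := by
  rw [connected_iff]
  refine ⟨?_, ⟨⟨x, rfl⟩⟩⟩
  rintro ⟨a, ha⟩ ⟨c, hc⟩
  simp only [Set.mem_singleton_iff] at ha hc
  subst ha; subst hc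
  exact Reachable.refl _

/-- connected component of `b` within vertex set `W'` -/
def comp {V : Type} (G : SimpleGraph V) (W' : Set V) (b : V) : Set V :=
  {x | x ∈ W' ∧ Relation.ReflTransGen (fun u v => u ∈ W' ∧ v ∈ W' ∧ G.Adj u v) b x}

lemma comp_subset {V : Type} (G : SimpleGraph V) (W' : Set V) (b : V) : comp G W' b ⊆ W' :=
  fun _ h => h.1

lemma mem_comp_self {V : Type} (G : SimpleGraph V) {W' : Set V} {b : V} (hb : b ∈ W') :
    b ∈ comp G W' b := ⟨hb, .refl⟩

lemma comp_closed {V : Type} (G : SimpleGraph V) {W' : Set V} {b x y : V} (hx : x ∈ comp G W' b)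
    (hy : y ∈ W') (hadj : G.Adj x y) : y ∈ comp G W' b :=
  ⟨hy, hx.2.tail ⟨hx.1, hy, hadj⟩⟩

lemma comp_connected {V : Type} (G : SimpleGraph V) {W' : Set V} {b : V} (hb : b ∈ W') :
    (G.induce (comp G W' b)).Connected := by
  have hbc : b ∈ comp G W' b := mem_comp_self G hb
  have main : ∀ x (hchain : Relation.ReflTransGen
      (fun u v => u ∈ W' ∧ v ∈ W' ∧ G.Adj u v) b x) (hxW : x ∈ W'),
      (G.induce (comp G W' b)).Reachable ⟨b, hbc⟩ ⟨x, ⟨hxW, hchain⟩⟩ := by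
    intro x hchain
    induction hchain with
    | refl => intro h; exact Reachable.refl _
    | @tail c x h step ih =>
        intro hxW
        have hr := ih step.1
        have hadj : (G.induce (comp G W' b)).Adj ⟨c, ⟨step.1, h⟩⟩ ⟨x, ⟨hxW, h.tail step⟩⟩ :=
          step.2.2
        exact hr.trans hadj.reachable
  rw [connected_iff]
  refine ⟨?_, ⟨⟨b, hbc⟩⟩⟩
  rintro ⟨x, hx⟩ ⟨y, hy⟩
  exact (main x hx.2 hx.1).symm.trans (main y hy.2 hy.1)

lemma key (t : ℕ) {V : Type} [Fintype V] [DecidableEq V] (G : SimpleGraph V)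
    (hG : ¬ G.HasCompleteMinor t) :
    ∀ (n : ℕ) (W : Set V), W.ncard = n → t - 1 ≤ n →
      {s : Finset V | G.IsNClique (t-1) s ∧ ↑s ⊆ W}.ncard ≤ n + 2 - t := by
  intro n
  induction n using Nat.strong_induction_on with
  | _ n IH =>
  intro W hWn hn
  by_cases hm : {s : Finset V | G.IsNClique (t-1) s ∧ ↑s ⊆ W}.ncard ≤ 1
  · omega
  push_neg at hm
  rw [Set.one_lt_ncard (Set.toFinite _)] at hm
  obtain ⟨A, ⟨hAclq, hAW⟩, B, ⟨hBclq, hBW⟩, hABne⟩ := hm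
  have hBA : ¬ (B ⊆ A) := by
    intro h
    exact hABne ((Finset.eq_of_subset_of_card_le h (by rw [hAclq.2, hBclq.2])).symm)
  obtain ⟨b, hbB, hbA⟩ := Finset.not_subset.mp hBA
  set W' : Set V := W \ ↑A with hW'
  have hbW' : b ∈ W' := ⟨hBW hbB, by simpa using hbA⟩
  set C : Set V := comp G W' b with hC
  have hCW' : C ⊆ W' := fun _ h => h.1
  have hbC : b ∈ C := ⟨hbW', .refl⟩
  have hCA : ∀ x ∈ C, x ∉ (↑A : Set V) := fun x hx => (hCW' hx).2
  set S : Set V := {a : V | a ∈ (↑A : Set V) ∧ ∃ c ∈ C, G.Adj a c} with hS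
  by_cases hSA : ∀ a ∈ A, a ∈ S
  · -- build a K_t minor, contradiction
    exfalso
    apply hG
    have hcard : A.card = t - 1 := hAclq.2
    set f : Fin (t-1) → V := fun i => ((A.equivFinOfCardEq hcard).symm i : V) with hf
    have hfA : ∀ i, f i ∈ A := fun i => ((A.equivFinOfCardEq hcard).symm i).2
    have hfinj : Function.Injective f := by
      intro i j hij
      exact (Equiv.injective _) (Subtype.ext hij)
    refine ⟨fun i => if h : (i : ℕ) < t-1 then {f ⟨i, h⟩} else C, ?_, ?_, ?_, ?_⟩
    · intro i
      by_cases h : (i : ℕ) < t-1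
      · simp only [dif_pos h]; exact ⟨_, rfl⟩
      · simp only [dif_neg h]; exact ⟨b, hbC⟩
    · intro i
      dsimp only
      by_cases h : (i : ℕ) < t-1
      · rw [dif_pos h]; exact connected_induce_singleton G _
      · rw [dif_neg h]; exact comp_connected G hbW'
    · intro i j hij
      by_cases hi : (i : ℕ) < t-1 <;> by_cases hj : (j : ℕ) < t-1 <;>
        simp only [dif_pos, dif_neg, hi, hj]
      · rw [Set.disjoint_singleton]
        intro h
        exact hij (Fin.ext (by simpa using congrArg Fin.val (hfinj h)))
      · rw [Set.disjoint_singleton_left]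
        exact fun h => hCA _ h (by exact_mod_cast hfA _)
      · rw [Set.disjoint_singleton_right]
        exact fun h => hCA _ h (by exact_mod_cast hfA _)
      · exact absurd (Fin.ext (by omega : (i:ℕ) = (j:ℕ))) hij
    · intro i j hij
      by_cases hi : (i : ℕ) < t-1 <;> by_cases hj : (j : ℕ) < t-1 <;>
        simp only [dif_pos, dif_neg, hi, hj]
      · refine ⟨f ⟨i, hi⟩, rfl, f ⟨j, hj⟩, rfl, ?_⟩
        refine hAclq.1 (hfA _) (hfA _) ?_
        intro h
        exact hij (Fin.ext (by simpa using congrArg Fin.val (hfinj h)))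
      · obtain ⟨-, c, hcC, hadj⟩ := hSA _ (hfA ⟨i, hi⟩)
        exact ⟨f ⟨i, hi⟩, rfl, c, hcC, hadj⟩
      · obtain ⟨-, c, hcC, hadj⟩ := hSA _ (hfA ⟨j, hj⟩)
        exact ⟨c, hcC, f ⟨j, hj⟩, rfl, hadj.symm⟩
      · exact absurd (Fin.ext (by omega : (i:ℕ) = (j:ℕ))) hij
  · -- separation case
    push_neg at hSA
    obtain ⟨a0, ha0A, ha0S⟩ := hSA
    have ht2 : 2 ≤ t := by
      by_contra h
      apply hABne
      have h0 : t - 1 = 0 := by omega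
      have hA0 : A = ∅ := Finset.card_eq_zero.mp (by rw [hAclq.2]; exact h0)
      have hB0 : B = ∅ := Finset.card_eq_zero.mp (by rw [hBclq.2]; exact h0)
      rw [hA0, hB0]
    set W1 : Set V := S ∪ C with hW1
    set W2 : Set V := W \ C with hW2
    have hCsubW : C ⊆ W := fun x hx => (hCW' hx).1
    have hSsub : S ⊆ (↑(A.erase a0) : Set V) := by
      intro a ha
      simp only [Finset.coe_erase, Set.mem_diff, Set.mem_singleton_iff]
      refine ⟨ha.1, fun h => ha0S ?_⟩
      rw [← h]; exact ha
    -- a0 ∉ W1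
    have ha0W1 : a0 ∉ W1 := by
      rintro (h | h)
      · exact ha0S h
      · exact hCA _ h ha0A
    have hn1lt : W1.ncard < n := by
      have hsub : W1 ⊆ W \ {a0} := by
        intro x hx
        refine ⟨?_, fun hx0 => ha0W1 ?_⟩
        · rcases hx with h | h
          exacts [hAW h.1, hCsubW h]
        · rwa [Set.mem_singleton_iff.mp hx0] at hx
      have h1 : (W \ {a0}).ncard = n - 1 := by
        rw [Set.ncard_diff_singleton_of_mem (hAW ha0A), hWn]
      have h2 := Set.ncard_le_ncard hsub (Set.toFinite _)
      have h3 : 1 ≤ n := by omega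
      omega
    have hn1le : W1.ncard ≤ (t - 2) + C.ncard := by
      have hsub : W1 ⊆ (↑(A.erase a0) : Set V) ∪ C := Set.union_subset_union_left _ hSsub
      have h1 := Set.ncard_le_ncard hsub (Set.toFinite _)
      have h2 := Set.ncard_union_le (↑(A.erase a0) : Set V) C
      have h3 : (↑(A.erase a0) : Set V).ncard = t - 2 := by
        rw [Set.ncard_coe_finset, Finset.card_erase_of_mem ha0A, hAclq.2]
        omega
      omega
    have hn2 : W2.ncard = n - C.ncard := by
      rw [Set.ncard_diff hCsubW (Set.toFinite _), hWn]
    have hCpos : 1 ≤ C.ncard := (Set.ncard_pos (Set.toFinite _)).mpr ⟨b, hbC⟩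
    have hClen : C.ncard ≤ n := hWn ▸ Set.ncard_le_ncard hCsubW (Set.toFinite _)
    -- every clique in W lies in W1 or W2
    have hsplit : ∀ s : Finset V, G.IsNClique (t-1) s → ↑s ⊆ W → (↑s ⊆ W1 ∨ ↑s ⊆ W2) := by
      intro s hclq hsW
      by_cases hsC : ∃ x ∈ s, x ∈ C
      · left
        obtain ⟨x, hxs, hxC⟩ := hsC
        intro y hy
        by_cases hyx : y = x
        · exact Or.inr (hyx ▸ hxC)
        · have hadj : G.Adj x y := hclq.1 (Finset.mem_coe.mpr hxs) hy (Ne.symm hyx)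
          by_cases hyA : y ∈ (↑A : Set V)
          · exact Or.inl ⟨hyA, x, hxC, hadj.symm⟩
          · refine Or.inr ⟨⟨hsW hy, hyA⟩, hxC.2.tail ⟨hxC.1, ⟨hsW hy, hyA⟩, hadj⟩⟩
      · right
        exact fun y hy => ⟨hsW hy, fun hC' => hsC ⟨y, Finset.mem_coe.mp hy, hC'⟩⟩
    have hcount : {s : Finset V | G.IsNClique (t-1) s ∧ ↑s ⊆ W}.ncard ≤
        {s : Finset V | G.IsNClique (t-1) s ∧ ↑s ⊆ W1}.ncard +
        {s : Finset V | G.IsNClique (t-1) s ∧ ↑s ⊆ W2}.ncard := by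
      refine le_trans (Set.ncard_le_ncard ?_ (Set.toFinite _)) (Set.ncard_union_le _ _)
      rintro s ⟨hclq, hsW⟩
      rcases hsplit s hclq hsW with h | h
      · exact Or.inl ⟨hclq, h⟩
      · exact Or.inr ⟨hclq, h⟩
    have hbound : ∀ U : Set V, U.ncard < n →
        ({s : Finset V | G.IsNClique (t-1) s ∧ ↑s ⊆ U}.ncard ≤ U.ncard + 2 - t ∧
          t - 1 ≤ U.ncard) ∨
        {s : Finset V | G.IsNClique (t-1) s ∧ ↑s ⊆ U}.ncard = 0 := by
      intro U hUlt
      by_cases h : t - 1 ≤ U.ncard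
      · exact Or.inl ⟨IH U.ncard hUlt U rfl h, h⟩
      · refine Or.inr ((Set.ncard_eq_zero (Set.toFinite _)).mpr ?_)
        by_contra hne
        obtain ⟨s, hclq, hsU⟩ := Set.nonempty_iff_ne_empty.mpr hne
        have h1 : (↑s : Set V).ncard ≤ U.ncard := Set.ncard_le_ncard hsU (Set.toFinite _)
        rw [Set.ncard_coe_finset, hclq.2] at h1
        omega
    have hb1 := hbound W1 hn1lt
    have hb2 := hbound W2 (by omega)
    omega

def exG (t n : ℕ) : SimpleGraph (Fin n) where
  Adj x y := x ≠ y ∧ (x.1 < t-2 ∨ y.1 < t-2)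
  symm := by
    refine ⟨?_⟩
    intro x y ⟨h1, h2⟩
    exact ⟨h1.symm, h2.symm⟩
  loopless := ⟨fun x h => h.1 rfl⟩

section
variable (t n : ℕ)

def Tset : Finset (Fin n) := Finset.univ.filter (fun x : Fin n => x.1 < t-2)

lemma mem_Tset (x : Fin n) : x ∈ Tset t n ↔ x.1 < t-2 := by
  simp [Tset]

lemma Tset_card (h : t - 2 ≤ n) : (Tset t n).card = t - 2 := by
  have : Tset t n = (Finset.univ : Finset (Fin (t-2))).map
      ⟨fun i => ⟨i.1, lt_of_lt_of_le i.2 h⟩, by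
        intro a b hab
        simpa [Fin.ext_iff] using hab⟩ := by
    ext x
    simp only [mem_Tset, Finset.mem_map, Finset.mem_univ, true_and]
    constructor
    · intro hx
      exact ⟨⟨x.1, hx⟩, Fin.ext rfl⟩
    · rintro ⟨i, hi⟩
      have : x.1 = i.1 := by
        have := congrArg Fin.val hi
        exact this.symm
      omega
  rw [this, Finset.card_map, Finset.card_univ, Fintype.card_fin]

lemma exG_not_minor (ht : 2 ≤ t) (h : t - 2 ≤ n) : ¬ (exG t n).HasCompleteMinor t := by
  classical
  rintro ⟨Bf, hne, -, hdisj, hadj⟩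
  set M : Finset (Fin t) := Finset.univ.filter (fun i => ∃ x ∈ Bf i, x.1 < t-2) with hM
  have hMcard : M.card ≤ t - 2 := by
    have hch : ∀ i ∈ M, ∃ x, x ∈ Bf i ∧ x.1 < t-2 := by
      intro i hi
      simpa [hM] using (Finset.mem_filter.mp hi).2
    choose g hg using hch
    calc M.card = (M.attach).card := Finset.card_attach.symm
    _ ≤ (Tset t n).card := by
        apply Finset.card_le_card_of_injOn (fun i => g i.1 i.2)
        · intro i _
          exact (mem_Tset t n _).mpr (hg i.1 i.2).2
        · intro i _ j _ hij
          by_contra hne'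
          have hij' : i.1 ≠ j.1 := fun h' => hne' (Subtype.ext h')
          have := hdisj hij'
          exact (this.ne_of_mem (hg i.1 i.2).1 (hg j.1 j.2).1) hij
    _ = t - 2 := Tset_card t n h
  have hMc : (Finset.univ \ M).card ≤ 1 := by
    rw [Finset.card_le_one]
    intro i hi j hj
    by_contra hij
    obtain ⟨u, hu, v, hv, huv⟩ := hadj hij
    have hiM : i ∉ M := (Finset.mem_sdiff.mp hi).2
    have hjM : j ∉ M := (Finset.mem_sdiff.mp hj).2
    simp only [hM, Finset.mem_filter, Finset.mem_univ, true_and, not_exists, not_and] at hiM hjM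
    rcases (huv : u ≠ v ∧ (u.1 < t-2 ∨ v.1 < t-2)).2 with h' | h'
    · exact hiM u hu h'
    · exact hjM v hv h'
  have h1 : (Finset.univ \ M).card = t - M.card := by
    rw [Finset.card_sdiff_of_subset (Finset.subset_univ _), Finset.card_univ, Fintype.card_fin]
  have hMle : M.card ≤ t := by
    calc M.card ≤ Finset.univ.card := Finset.card_le_card (Finset.subset_univ _)
    _ = t := by rw [Finset.card_univ, Fintype.card_fin]
  omega

lemma exG_cliques (ht : 2 ≤ t) (h : t - 1 ≤ n) :
    {s : Finset (Fin n) | (exG t n).IsNClique (t-1) s} =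
      (fun v => insert v (Tset t n)) '' {v : Fin n | t-2 ≤ v.1} := by
  classical
  have hTn : t - 2 ≤ n := by omega
  ext s
  simp only [Set.mem_setOf_eq, Set.mem_image]
  constructor
  · intro hs
    set sI := s.filter (fun x : Fin n => ¬ x.1 < t-2) with hsI
    set sT := s.filter (fun x : Fin n => x.1 < t-2) with hsT
    have hcards : sT.card + sI.card = t - 1 := by
      rw [hsT, hsI, Finset.card_filter_add_card_filter_not, hs.2]
    have hsIle : sI.card ≤ 1 := by
      rw [Finset.card_le_one]
      intro u hu v hv
      by_contra huv
      have hadj := hs.1 (Finset.mem_coe.mpr (Finset.mem_filter.mp hu).1)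
        (Finset.mem_coe.mpr (Finset.mem_filter.mp hv).1) huv
      rcases (hadj : u ≠ v ∧ (u.1 < t-2 ∨ v.1 < t-2)).2 with h' | h'
      · exact (Finset.mem_filter.mp hu).2 h'
      · exact (Finset.mem_filter.mp hv).2 h'
    have hsTsub : sT ⊆ Tset t n := by
      intro x hx
      exact (mem_Tset t n x).mpr (Finset.mem_filter.mp hx).2
    have hsTle : sT.card ≤ t - 2 := by
      calc sT.card ≤ (Tset t n).card := Finset.card_le_card hsTsub
      _ = t - 2 := Tset_card t n hTn
    have hsI1 : sI.card = 1 := by omega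
    have hsTeq : sT = Tset t n := by
      apply Finset.eq_of_subset_of_card_le hsTsub
      rw [Tset_card t n hTn]; omega
    obtain ⟨v, hv⟩ := Finset.card_eq_one.mp hsI1
    have hvI : v ∈ sI := hv ▸ Finset.mem_singleton_self v
    refine ⟨v, by
      have := (Finset.mem_filter.mp hvI).2
      omega, ?_⟩
    rw [← hsTeq, Finset.insert_eq, ← hv, Finset.union_comm]
    exact Finset.filter_union_filter_not_eq _ s
  · rintro ⟨v, hv, rfl⟩
    have hvT : v ∉ Tset t n := by
      rw [mem_Tset]; omega
    constructor
    · intro x hx y hy hxy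
      refine (⟨hxy, ?_⟩ : x ≠ y ∧ (x.1 < t-2 ∨ y.1 < t-2))
      simp only [Finset.coe_insert, Set.mem_insert_iff, Finset.mem_coe, mem_Tset] at hx hy
      rcases hx with rfl | hx
      · rcases hy with rfl | hy
        · exact absurd rfl hxy
        · exact Or.inr hy
      · exact Or.inl hx
    · rw [Finset.card_insert_of_notMem hvT, Tset_card t n hTn]
      omega
end


theorem cliqueCount_pred_max_of_not_hasCompleteMinor (t n : ℕ) (ht : 2 ≤ t) (hn : t - 1 ≤ n) :
    (∀ (V : Type) [Fintype V], ∀ G : SimpleGraph V, Fintype.card V = n →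
        ¬ G.HasCompleteMinor t → G.cliqueCount (t - 1) ≤ n + 2 - t) ∧
    (∃ G : SimpleGraph (Fin n), ¬ G.HasCompleteMinor t ∧
        G.cliqueCount (t - 1) = n + 2 - t) := by
  classical
  constructor
  · intro V _ G hcard hminor
    letI := Classical.decEq V
    have h := key t G hminor n Set.univ (by rw [Set.ncard_univ, Nat.card_eq_fintype_card, hcard]) hn
    have heq : {s : Finset V | G.IsNClique (t-1) s ∧ ↑s ⊆ (Set.univ : Set V)} =
        {s : Finset V | G.IsNClique (t-1) s} := by
      simp [Set.subset_univ]
    rw [heq] at h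
    exact h
  · refine ⟨exG t n, exG_not_minor t n ht (by omega), ?_⟩
    rw [SimpleGraph.cliqueCount, exG_cliques t n ht hn]
    have hinj : Set.InjOn (fun v => insert v (Tset t n)) {v : Fin n | t-2 ≤ v.1} := by
      intro v hv w hw hvw
      have hvw' : insert v (Tset t n) = insert w (Tset t n) := hvw
      have h1 : v ∈ insert w (Tset t n) := by
        rw [← hvw']; exact Finset.mem_insert_self v _
      rcases Finset.mem_insert.mp h1 with h | h
      · exact h
      · exfalso
        have := (mem_Tset t n v).mp h
        have := hv
        simp only [Set.mem_setOf_eq] at this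
        omega
    rw [Set.ncard_image_of_injOn hinj]
    have h1 : {v : Fin n | t-2 ≤ v.1} =
        ↑(Finset.univ.filter (fun v : Fin n => ¬ v.1 < t-2)) := by
      ext v
      simp only [Set.mem_setOf_eq, Finset.coe_filter, Finset.mem_univ, true_and]
      omega
    rw [h1, Set.ncard_coe_finset]
    have h2 := Finset.card_filter_add_card_filter_not
      (s := (Finset.univ : Finset (Fin n))) (p := fun v : Fin n => v.1 < t-2)
    have h3 : (Finset.univ.filter (fun v : Fin n => v.1 < t-2)).card = t - 2 :=
      Tset_card t n (by omega)
    have h4 : (Finset.univ : Finset (Fin n)).card = n := by simp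
    omega
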